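/- Suppose closure(conv X) is locally polyhedral, i.e., its intersection with every box is a polytope, and suppose the problem minimize c·x subject to Ax ≥ b, x ∈ closure(conv X) admits an optimal solution x*. Then v^L = v̄*, where v^L = sup_{λ≥0} inf_{x∈X}(c·x + λ·(b−Ax)) and v̄* = c·x*. -/

import Mathlib

open Finset

variable {E : Type*} [NormedAddCommGroup E] [InnerProductSpace ℝ E] [FiniteDimensional ℝ E]
variable {ι : Type*} [Fintype ι]

lemma sum_support_subset' {M : Type*} [AddCommMonoid M] (S : Finset ι) (f : ι → M)
    (hf : ∀ i ∉ S, f i = 0) : ∑ i : ι, f i = ∑ i : S, f ↑i := by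
  rw [Finset.sum_coe_sort S f]
  exact (Finset.sum_subset (Finset.subset_univ S) (fun x _ hx => hf x hx)).symm

lemma conic_caratheodory (v : ι → E) :
    ∀ N (t : ι → ℝ), (∀ i, 0 ≤ t i) → (Finset.univ.filter fun i => t i ≠ 0).card ≤ N →
    ∃ S : Finset ι, LinearIndependent ℝ (fun i : S => v ↑i) ∧
      ∃ t' : ι → ℝ, (∀ i, 0 ≤ t' i) ∧ (∀ i ∉ S, t' i = 0) ∧
        ∑ i : ι, t' i • v i = ∑ i : ι, t i • v i := by
  classical
  intro N
  induction N with
  | zero =>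
    intro t ht hcard
    have hS : (Finset.univ.filter fun i => t i ≠ 0) = ∅ :=
      Finset.card_eq_zero.mp (le_antisymm hcard (Nat.zero_le _))
    refine ⟨∅, ?_, t, ht, ?_, rfl⟩
    · exact linearIndependent_empty_type
    · intro i _
      by_contra h
      have : i ∈ (Finset.univ.filter fun i => t i ≠ 0) := by simp [h]
      rw [hS] at this; exact absurd this (Finset.notMem_empty i)
  | succ N ih =>
    intro t ht hcard
    set S₀ := (Finset.univ.filter fun i => t i ≠ 0) with hS₀
    by_cases hind : LinearIndependent ℝ (fun i : S₀ => v ↑i)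
    · refine ⟨S₀, hind, t, ht, ?_, rfl⟩
      intro i hi
      by_contra h
      exact hi (by simp [hS₀, h])
    · obtain ⟨g, hgsum, i₀, hgi₀⟩ := Fintype.not_linearIndependent_iff.mp hind
      -- extend g to ι
      set g' : ι → ℝ := fun i => if h : i ∈ S₀ then g ⟨i, h⟩ else 0 with hg'
      have hg'sum : ∑ i : ι, g' i • v i = 0 := by
        rw [sum_support_subset' S₀ (fun i => g' i • v i)
          (fun i hi => by simp [hg', dif_neg hi])]
        rw [← hgsum]
        apply Finset.sum_congr rfl
        intro i _
        simp [hg']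
      have hg'i₀ : g' (↑i₀ : ι) ≠ 0 := by simpa [hg'] using hgi₀
      -- pick sign so some coordinate positive
      obtain ⟨s, hssum, hssupp, j, hsj⟩ :
          ∃ s : ι → ℝ, (∑ i : ι, s i • v i = 0) ∧ (∀ i ∉ S₀, s i = 0) ∧ ∃ j, 0 < s j := by
        rcases lt_or_gt_of_ne hg'i₀ with h | h
        · refine ⟨-g', ?_, ?_, ⟨↑i₀, by simpa using h⟩⟩
          · simp only [Pi.neg_apply, neg_smul, Finset.sum_neg_distrib, hg'sum, neg_zero]
          · intro i hi; simp [hg', dif_neg hi]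
        · exact ⟨g', hg'sum, fun i hi => by simp [hg', dif_neg hi], ↑i₀, h⟩
      set I := S₀.filter (fun i => 0 < s i) with hI
      have hjI : j ∈ I := by
        refine Finset.mem_filter.mpr ⟨?_, hsj⟩
        by_contra hjS
        rw [hssupp j hjS] at hsj; exact lt_irrefl 0 hsj
      obtain ⟨i₁, hi₁I, hi₁min⟩ := Finset.exists_min_image I (fun i => t i / s i) ⟨j, hjI⟩
      have hsi₁ : 0 < s i₁ := (Finset.mem_filter.mp hi₁I).2
      have hi₁S₀ : i₁ ∈ S₀ := (Finset.mem_filter.mp hi₁I).1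
      set τ := t i₁ / s i₁ with hτ
      have hτ0 : 0 ≤ τ := div_nonneg (ht i₁) (le_of_lt hsi₁)
      set t'' : ι → ℝ := fun i => t i - τ * s i with ht''
      have ht''0 : ∀ i, 0 ≤ t'' i := by
        intro i
        by_cases hsi : 0 < s i
        · have hiI : i ∈ I := by
            refine Finset.mem_filter.mpr ⟨?_, hsi⟩
            by_contra hiS
            rw [hssupp i hiS] at hsi; exact lt_irrefl 0 hsi
          have := hi₁min i hiI
          have : τ * s i ≤ t i := (le_div_iff₀ hsi).mp this
          simp only [ht'']; linarith
        · push_neg at hsi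
          have : τ * s i ≤ 0 := mul_nonpos_of_nonneg_of_nonpos hτ0 hsi
          have := ht i
          simp only [ht'']; linarith
      have ht''sum : ∑ i : ι, t'' i • v i = ∑ i : ι, t i • v i := by
        simp only [ht'', sub_smul, Finset.sum_sub_distrib, mul_smul]
        rw [← Finset.smul_sum, hssum, smul_zero, sub_zero]
      have ht''supp : (Finset.univ.filter fun i => t'' i ≠ 0) ⊆ S₀.erase i₁ := by
        intro i hi
        simp only [Finset.mem_filter, Finset.mem_univ, true_and] at hi
        refine Finset.mem_erase.mpr ⟨?_, ?_⟩
        · rintro rfl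
          apply hi
          simp only [ht'', hτ]
          field_simp
          ring
        · by_contra hiS
          apply hi
          have h1 : t i = 0 := by
            by_contra h
            exact hiS (Finset.mem_filter.mpr ⟨Finset.mem_univ i, h⟩)
          simp [ht'', h1, hssupp i hiS]
      have hcard'' : (Finset.univ.filter fun i => t'' i ≠ 0).card ≤ N := by
        have h1 := Finset.card_le_card ht''supp
        have h2 : (S₀.erase i₁).card = S₀.card - 1 := Finset.card_erase_of_mem hi₁S₀
        have h3 : S₀.card ≤ N + 1 := hcard
        omega
      obtain ⟨S, hS, t3, h1, h2, h3⟩ := ih t'' ht''0 hcard''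
      exact ⟨S, hS, t3, h1, h2, by rw [h3, ht''sum]⟩

lemma isClosed_coneSet (v : ι → E) :
    IsClosed {x : E | ∃ t : ι → ℝ, (∀ i, 0 ≤ t i) ∧ x = ∑ i : ι, t i • v i} := by
  classical
  have hrw : {x : E | ∃ t : ι → ℝ, (∀ i, 0 ≤ t i) ∧ x = ∑ i : ι, t i • v i}
      = ⋃ S : Finset ι, {x | LinearIndependent ℝ (fun i : S => v ↑i) ∧
          ∃ t : ι → ℝ, (∀ i, 0 ≤ t i) ∧ (∀ i ∉ S, t i = 0) ∧ x = ∑ i : ι, t i • v i} := by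
    ext x
    simp only [Set.mem_setOf_eq, Set.mem_iUnion]
    constructor
    · rintro ⟨t, ht, rfl⟩
      obtain ⟨S, hS, t', h1, h2, h3⟩ := conic_caratheodory v _ t ht le_rfl
      exact ⟨S, hS, t', h1, h2, h3.symm⟩
    · rintro ⟨S, _, t, h1, _, rfl⟩
      exact ⟨t, h1, rfl⟩
  rw [hrw]
  apply isClosed_iUnion_of_finite
  intro S
  by_cases hind : LinearIndependent ℝ (fun i : S => v ↑i)
  · -- image of orthant under closed embedding
    let L : (S → ℝ) →ₗ[ℝ] E :=
      { toFun := fun u => ∑ i : S, u i • v ↑i,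
        map_add' := by intro a b; simp [add_smul, Finset.sum_add_distrib],
        map_smul' := by intro r a; simp [smul_smul, Finset.smul_sum] }
    have hker : LinearMap.ker L = ⊥ := by
      rw [LinearMap.ker_eq_bot']
      intro u hu
      have := Fintype.linearIndependent_iff.mp hind u hu
      funext i; exact this i
    have hemb := LinearMap.isClosedEmbedding_of_injective hker
    have horth : IsClosed {u : S → ℝ | ∀ i, 0 ≤ u i} := by
      have : {u : S → ℝ | ∀ i, 0 ≤ u i} = ⋂ i : S, {u | 0 ≤ u i} := by
        ext u; simp
      rw [this]
      exact isClosed_iInter (fun i => isClosed_le continuous_const (continuous_apply i))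
    have himg : {x : E | LinearIndependent ℝ (fun i : S => v ↑i) ∧
        ∃ t : ι → ℝ, (∀ i, 0 ≤ t i) ∧ (∀ i ∉ S, t i = 0) ∧ x = ∑ i : ι, t i • v i}
        = L '' {u : S → ℝ | ∀ i, 0 ≤ u i} := by
      ext x
      simp only [Set.mem_setOf_eq, Set.mem_image]
      constructor
      · rintro ⟨-, t, ht0, hts, rfl⟩
        refine ⟨fun i => t ↑i, fun i => ht0 ↑i, ?_⟩
        show ∑ i : S, t ↑i • v ↑i = ∑ i : ι, t i • v i
        exact (sum_support_subset' S (fun i => t i • v i)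
          (fun i hi => by simp [hts i hi])).symm
      · rintro ⟨u, hu, rfl⟩
        refine ⟨hind, fun i => if h : i ∈ S then u ⟨i, h⟩ else 0, ?_, ?_, ?_⟩
        · intro i
          by_cases h : i ∈ S
          · simpa [h] using hu ⟨i, h⟩
          · simp [h]
        · intro i hi; simp [hi]
        · show (L u : E) = _
          rw [sum_support_subset' S
            (fun i => (if h : i ∈ S then u ⟨i, h⟩ else 0) • v i)
            (fun i hi => by simp [hi])]
          show ∑ i : S, u i • v ↑i = _
          refine Finset.sum_congr rfl fun i _ => ?_
          beta_reduce
          rw [dif_pos i.2]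
    rw [himg]
    exact hemb.isClosedMap _ horth
  · have : {x : E | LinearIndependent ℝ (fun i : S => v ↑i) ∧
        ∃ t : ι → ℝ, (∀ i, 0 ≤ t i) ∧ (∀ i ∉ S, t i = 0) ∧ x = ∑ i : ι, t i • v i} = ∅ := by
      ext x; simp only [Set.mem_setOf_eq, Set.mem_empty_iff_false, iff_false]
      rintro ⟨h, -⟩; exact hind h
    rw [this]; exact isClosed_empty

open scoped InnerProductSpace in
lemma farkas_cone (v : ι → E) (q : E)
    (h : ∀ y : E, (∀ i, 0 ≤ ⟪v i, y⟫_ℝ) → 0 ≤ ⟪q, y⟫_ℝ) :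
    ∃ t : ι → ℝ, (∀ i, 0 ≤ t i) ∧ q = ∑ i : ι, t i • v i := by
  classical
  set C : Set E := {x : E | ∃ t : ι → ℝ, (∀ i, 0 ≤ t i) ∧ x = ∑ i : ι, t i • v i} with hC
  by_contra hq
  have hqC : q ∉ C := hq
  let K : ConvexCone ℝ E :=
    { carrier := C,
      smul_mem' := by
        rintro r hr x ⟨t, ht, rfl⟩
        exact ⟨fun i => r * t i, fun i => mul_nonneg (le_of_lt hr) (ht i),
          by rw [Finset.smul_sum]; simp [smul_smul]⟩,
      add_mem' := by
        rintro x ⟨t, ht, rfl⟩ y ⟨t', ht', rfl⟩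
        exact ⟨fun i => t i + t' i, fun i => add_nonneg (ht i) (ht' i),
          by simp [add_smul, Finset.sum_add_distrib]⟩ }
  have hne : (K : Set E).Nonempty := ⟨0, ⟨fun _ => 0, fun _ => le_rfl, by simp⟩⟩
  have hcl : IsClosed (K : Set E) := isClosed_coneSet v
  obtain ⟨y, hy1, hy2⟩ : ∃ y : E, (∀ x ∈ K, 0 ≤ ⟪x, y⟫_ℝ) ∧ ⟪y, q⟫_ℝ < 0 := by
    let P : ProperCone ℝ E :=
      { carrier := C
        add_mem' := fun ha hb => K.add_mem ha hb
        zero_mem' := ⟨fun _ => 0, fun _ => le_rfl, by simp⟩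
        smul_mem' := by
          rintro r x ⟨t, ht, rfl⟩
          exact ⟨fun i => (r : ℝ) * t i, fun i => mul_nonneg r.2 (ht i),
            by rw [Finset.smul_sum]; exact Finset.sum_congr rfl fun i _ => by rw [mul_smul]; rfl⟩
        isClosed' := hcl }
    obtain ⟨y, h1, h2⟩ := ProperCone.hyperplane_separation' P (x₀ := q) hqC
    exact ⟨y, h1, by rw [real_inner_comm]; exact h2⟩
  have hvy : ∀ i, 0 ≤ ⟪v i, y⟫_ℝ := by
    intro i
    apply hy1
    exact ⟨fun j => if j = i then 1 else 0, fun j => by positivity,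
      by simp [ite_smul]⟩
  have := h y hvy
  rw [real_inner_comm] at hy2
  linarith

section Part2

open Matrix

variable {m n : ℕ}

lemma lag_eq (A : Matrix (Fin m) (Fin n) ℝ) (b : Fin m → ℝ) (c : Fin n → ℝ)
    (lam : Fin m → ℝ) (x : Fin n → ℝ) :
    c ⬝ᵥ x + lam ⬝ᵥ (b - A.mulVec x) = (c - A.transpose.mulVec lam) ⬝ᵥ x + lam ⬝ᵥ b := by
  rw [Matrix.mulVec_transpose, sub_dotProduct, dotProduct_sub, dotProduct_mulVec]
  ring

lemma dp_isLinear (d : Fin n → ℝ) : IsLinearMap ℝ (fun y : Fin n → ℝ => d ⬝ᵥ y) := by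
  constructor
  · intro x y
    simp [dotProduct, mul_add, Finset.sum_add_distrib]
  · intro r x
    simp only [dotProduct, Pi.smul_apply, smul_eq_mul, Finset.mul_sum]
    exact Finset.sum_congr rfl fun i _ => by ring

lemma halfspace_convex (d : Fin n → ℝ) (r : ℝ) :
    Convex ℝ {y : Fin n → ℝ | r ≤ d ⬝ᵥ y} :=
  convex_halfSpace_ge (dp_isLinear d) r

lemma halfspace_closed (d : Fin n → ℝ) (r : ℝ) :
    IsClosed {y : Fin n → ℝ | r ≤ d ⬝ᵥ y} := by
  apply isClosed_le continuous_const
  show Continuous fun y : Fin n → ℝ => ∑ i, d i * y i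
  exact continuous_finset_sum _ fun i _ => continuous_const.mul (continuous_apply i)

lemma dot_nonpos {k : ℕ} (lam u : Fin k → ℝ) (h1 : 0 ≤ lam) (h2 : u ≤ 0) :
    lam ⬝ᵥ u ≤ 0 :=
  Finset.sum_nonpos fun i _ => mul_nonpos_of_nonneg_of_nonpos (h1 i) (h2 i)

open scoped InnerProductSpace in
lemma lp_duality (A : Matrix (Fin m) (Fin n) ℝ) (b : Fin m → ℝ) (c : Fin n → ℝ)
    (F : Finset (Fin n → ℝ)) (xstar : Fin n → ℝ)
    (hopt : ∀ y ∈ convexHull ℝ (F : Set (Fin n → ℝ)), b ≤ A.mulVec y → c ⬝ᵥ xstar ≤ c ⬝ᵥ y) :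
    ∃ lam : Fin m → ℝ, 0 ≤ lam ∧
      ∀ y ∈ convexHull ℝ (F : Set (Fin n → ℝ)),
        c ⬝ᵥ xstar ≤ c ⬝ᵥ y + lam ⬝ᵥ (b - A.mulVec y) := by
  classical
  set κ := {y : Fin n → ℝ // y ∈ F} with hκ
  let w : (Fin m ⊕ κ) → (κ → ℝ) :=
    Sum.elim (fun j (f : κ) => A.mulVec ↑f j - b j) (fun f₀ f => if f = f₀ then 1 else 0)
  let v : (Fin m ⊕ κ) → EuclideanSpace ℝ κ := fun i => (WithLp.equiv 2 (κ → ℝ)).symm (w i)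
  let q : EuclideanSpace ℝ κ :=
    (WithLp.equiv 2 (κ → ℝ)).symm (fun f => c ⬝ᵥ (↑f : Fin n → ℝ) - c ⬝ᵥ xstar)
  have key : ∀ y : EuclideanSpace ℝ κ, (∀ i, 0 ≤ ⟪v i, y⟫_ℝ) → 0 ≤ ⟪q, y⟫_ℝ := by
    intro μ hμ
    have hμ0 : ∀ f : κ, 0 ≤ μ f := by
      intro f
      have := hμ (Sum.inr f)
      simp [v, w, PiLp.inner_apply, RCLike.inner_apply, conj_trivial,
        WithLp.equiv_symm_apply, PiLp.toLp_apply, ite_mul, one_mul, zero_mul, Finset.sum_ite_eq'] at this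
      rwa [Finset.sum_eq_single f (fun x _ hx => if_neg hx)
        (fun h => absurd (Finset.mem_univ f) h), if_pos rfl] at this
    have hμA : ∀ j : Fin m, 0 ≤ ∑ f : κ, (A.mulVec ↑f j - b j) * μ f := by
      intro j
      have := hμ (Sum.inl j)
      simpa [v, w, PiLp.inner_apply, RCLike.inner_apply, conj_trivial,
        WithLp.equiv_symm_apply, PiLp.toLp_apply, mul_comm] using this
    have hgoal : 0 ≤ ∑ f : κ, (c ⬝ᵥ (↑f : Fin n → ℝ) - c ⬝ᵥ xstar) * μ f := by
      have hexpand : ∀ (g : κ → ℝ) (r : ℝ),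
          ∑ f : κ, (g f - r) * μ f = (∑ f : κ, g f * μ f) - r * ∑ f : κ, μ f := by
        intro g r
        simp only [sub_mul]
        rw [Finset.sum_sub_distrib, ← Finset.mul_sum]
      by_cases hσ : ∑ f : κ, μ f = 0
      · have hall : ∀ f : κ, μ f = 0 := by
          intro f
          exact (Finset.sum_eq_zero_iff_of_nonneg (fun f _ => hμ0 f)).mp hσ f
            (Finset.mem_univ f)
        simp [hall]
      · have hσpos : 0 < ∑ f : κ, μ f :=
          lt_of_le_of_ne (Finset.sum_nonneg fun f _ => hμ0 f) (Ne.symm hσ)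
        set σ := ∑ f : κ, μ f with hσdef
        set z : Fin n → ℝ := Finset.univ.centerMass μ (fun f : κ => (f : Fin n → ℝ)) with hz
        have hzF : z ∈ convexHull ℝ (F : Set (Fin n → ℝ)) := by
          apply Finset.centerMass_mem_convexHull _ (fun f _ => hμ0 f) hσpos
          intro f _
          exact f.2
        have hzsum : z = σ⁻¹ • ∑ f : κ, μ f • (f : Fin n → ℝ) := by
          rw [hz, Finset.centerMass]
        have hlin : ∀ d : Fin n → ℝ, d ⬝ᵥ z = σ⁻¹ * ∑ f : κ, μ f * (d ⬝ᵥ (f : Fin n → ℝ)) := by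
          intro d
          let L := IsLinearMap.mk' _ (dp_isLinear d)
          have hLz : d ⬝ᵥ z = L z := rfl
          rw [hLz, hzsum, LinearMap.map_smul, map_sum]
          simp only [LinearMap.map_smul, smul_eq_mul, IsLinearMap.mk'_apply, L]
        have hAz : b ≤ A.mulVec z := by
          intro j
          have hmv : A.mulVec z j = (A j) ⬝ᵥ z := rfl
          have h2 : σ * b j ≤ ∑ f : κ, μ f * ((A j) ⬝ᵥ (f : Fin n → ℝ)) := by
            have h3 := hμA j
            have h4 : ∀ f : κ, A.mulVec (↑f) j = (A j) ⬝ᵥ (f : Fin n → ℝ) := fun f => rfl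
            rw [hexpand (fun f => A.mulVec (↑f) j) (b j)] at h3
            simp only [h4] at h3
            have hcomm : ∑ f : κ, μ f * ((A j) ⬝ᵥ (f : Fin n → ℝ))
                = ∑ f : κ, ((A j) ⬝ᵥ (f : Fin n → ℝ)) * μ f :=
              Finset.sum_congr rfl fun f _ => mul_comm _ _
            rw [hcomm]
            linarith [h3]
          rw [hmv, hlin (A j)]
          rw [show b j = σ⁻¹ * (σ * b j) by field_simp]
          exact mul_le_mul_of_nonneg_left h2 (inv_nonneg.mpr hσpos.le)
        have hcz := hopt z hzF hAz
        have hczeq : c ⬝ᵥ z = σ⁻¹ * ∑ f : κ, μ f * (c ⬝ᵥ (f : Fin n → ℝ)) := hlin c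
        have hT : σ * (c ⬝ᵥ xstar) ≤ ∑ f : κ, μ f * (c ⬝ᵥ (f : Fin n → ℝ)) := by
          have := mul_le_mul_of_nonneg_left hcz hσpos.le
          rw [hczeq, show σ * (σ⁻¹ * ∑ f : κ, μ f * (c ⬝ᵥ (f : Fin n → ℝ)))
            = ∑ f : κ, μ f * (c ⬝ᵥ (f : Fin n → ℝ)) by field_simp] at this
          exact this
        rw [hexpand (fun f => c ⬝ᵥ (↑f : Fin n → ℝ)) (c ⬝ᵥ xstar)]
        have : ∀ f : κ, (c ⬝ᵥ (↑f : Fin n → ℝ)) * μ f = μ f * (c ⬝ᵥ (↑f : Fin n → ℝ)) :=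
          fun f => mul_comm _ _
        rw [Finset.sum_congr rfl fun f _ => this f]
        linarith
    calc (0:ℝ) ≤ ∑ f : κ, (c ⬝ᵥ (↑f : Fin n → ℝ) - c ⬝ᵥ xstar) * μ f := hgoal
      _ = ⟪q, μ⟫_ℝ := by
          simp [q, PiLp.inner_apply, RCLike.inner_apply, conj_trivial,
            WithLp.equiv_symm_apply, PiLp.toLp_apply, mul_comm]
  obtain ⟨t, ht0, hqt⟩ := farkas_cone v q key
  set lam : Fin m → ℝ := fun j => t (Sum.inl j) with hlamdef
  have hfun : (fun f : κ => c ⬝ᵥ (↑f : Fin n → ℝ) - c ⬝ᵥ xstar) = ∑ i, t i • (w i) := by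
    have h1 := congrArg (WithLp.linearEquiv 2 ℝ (κ → ℝ)) hqt
    rw [map_sum] at h1
    simpa [q, v, WithLp.coe_linearEquiv, WithLp.equiv_symm_apply, PiLp.toLp_apply] using h1
  have hvert : ∀ f : κ, c ⬝ᵥ xstar ≤ c ⬝ᵥ (↑f : Fin n → ℝ)
      + lam ⬝ᵥ (b - A.mulVec (↑f : Fin n → ℝ)) := by
    intro f
    have h2 := congrFun hfun f
    rw [Finset.sum_apply] at h2
    simp only [Pi.smul_apply, smul_eq_mul] at h2
    rw [Fintype.sum_sum_type] at h2
    have h3 : ∑ f₀ : κ, t (Sum.inr f₀) * (w (Sum.inr f₀)) f = t (Sum.inr f) := by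
      simp only [w, Sum.elim_inr, mul_ite, mul_one, mul_zero]
      rw [Finset.sum_ite_eq Finset.univ f (fun f₀ => t (Sum.inr f₀))]
      simp
    have h4 : ∀ j : Fin m, (w (Sum.inl j)) f = A.mulVec (↑f) j - b j := fun j => rfl
    simp only [h4] at h2
    rw [h3] at h2
    have h5 : lam ⬝ᵥ (b - A.mulVec (↑f : Fin n → ℝ))
        = - ∑ j : Fin m, lam j * (A.mulVec (↑f) j - b j) := by
      simp only [dotProduct, Pi.sub_apply]
      rw [← Finset.sum_neg_distrib]
      exact Finset.sum_congr rfl fun j _ => by ring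
    have h6 : 0 ≤ t (Sum.inr f) := ht0 (Sum.inr f)
    rw [h5]
    linarith [h2.ge, h2.le]
  refine ⟨lam, fun j => ht0 (Sum.inl j), ?_⟩
  intro y hy
  have hsub : (F : Set (Fin n → ℝ)) ⊆
      {y : Fin n → ℝ | c ⬝ᵥ xstar - lam ⬝ᵥ b ≤ (c - A.transpose.mulVec lam) ⬝ᵥ y} := by
    intro f hf
    have := hvert ⟨f, hf⟩
    rw [lag_eq] at this
    simp only [Set.mem_setOf_eq]
    linarith
  have hhull := convexHull_min hsub (halfspace_convex (c - A.transpose.mulVec lam)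
    (c ⬝ᵥ xstar - lam ⬝ᵥ b))
  have := hhull hy
  simp only [Set.mem_setOf_eq] at this
  rw [lag_eq]
  linarith

end Part2

section Part3

open Matrix

variable {m n : ℕ}

lemma sInf_le_affine_closure (d : Fin n → ℝ) (e : ℝ) (X : Set (Fin n → ℝ))
    (x : Fin n → ℝ) (hx : x ∈ closure (convexHull ℝ X)) :
    sInf ((fun z => ((d ⬝ᵥ z + e : ℝ) : EReal)) '' X) ≤ ((d ⬝ᵥ x + e : ℝ) : EReal) := by
  by_contra hlt
  push_neg at hlt
  obtain ⟨r, hr1, hr2⟩ := EReal.lt_iff_exists_real_btwn.mp hlt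
  have hXH : X ⊆ {z : Fin n → ℝ | r - e ≤ d ⬝ᵥ z} := by
    intro z hz
    have h1 : (r : EReal) < ((d ⬝ᵥ z + e : ℝ) : EReal) :=
      lt_of_lt_of_le hr2 (sInf_le ⟨z, hz, rfl⟩)
    have h2 : r < d ⬝ᵥ z + e := EReal.coe_lt_coe_iff.mp h1
    simp only [Set.mem_setOf_eq]
    linarith
  have hsub : closure (convexHull ℝ X) ⊆ {z : Fin n → ℝ | r - e ≤ d ⬝ᵥ z} :=
    closure_minimal (convexHull_min hXH (halfspace_convex d (r - e))) (halfspace_closed d (r - e))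
  have h3 : r - e ≤ d ⬝ᵥ x := hsub hx
  have h4 : d ⬝ᵥ x + e < r := EReal.coe_lt_coe_iff.mp hr1
  linarith

theorem geoffrion_locally_polyhedral {m n : ℕ} (A : Matrix (Fin m) (Fin n) ℝ)
    (b : Fin m → ℝ) (c : Fin n → ℝ) (X : Set (Fin n → ℝ))
    (hloc : ∀ l u : Fin n → ℝ, ∃ F : Finset (Fin n → ℝ),
      closure (convexHull ℝ X) ∩ Set.Icc l u = convexHull ℝ (F : Set (Fin n → ℝ)))
    (xstar : Fin n → ℝ)
    (hxstar : xstar ∈ closure (convexHull ℝ X) ∧ b ≤ A.mulVec xstar ∧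
      ∀ x ∈ closure (convexHull ℝ X), b ≤ A.mulVec x → c ⬝ᵥ xstar ≤ c ⬝ᵥ x) :
    sSup ((fun lam =>
        sInf ((fun x => ((c ⬝ᵥ x + lam ⬝ᵥ (b - A.mulVec x) : ℝ) : EReal)) '' X)) ''
          {lam : Fin m → ℝ | 0 ≤ lam}) = ((c ⬝ᵥ xstar : ℝ) : EReal) := by
  classical
  obtain ⟨hx1, hx2, hx3⟩ := hxstar
  set S := closure (convexHull ℝ X) with hSdef
  have hSconv : Convex ℝ S := (convex_convexHull ℝ X).closure
  obtain ⟨F, hF⟩ := hloc (xstar - 1) (xstar + 1)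
  have hxIcc : xstar ∈ Set.Icc (xstar - 1) (xstar + 1) := by
    constructor
    · intro i
      simp only [Pi.sub_apply, Pi.one_apply]
      linarith
    · intro i
      simp only [Pi.add_apply, Pi.one_apply]
      linarith
  have hxF : xstar ∈ convexHull ℝ (F : Set (Fin n → ℝ)) := by
    rw [← hF]; exact ⟨hx1, hxIcc⟩
  have hFS : convexHull ℝ (F : Set (Fin n → ℝ)) ⊆ S := by
    rw [← hF]; exact Set.inter_subset_left
  obtain ⟨lam, hlam0, hlam⟩ := lp_duality A b c F xstar
    (fun y hy hfeas => hx3 y (hFS hy) hfeas)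
  -- slack at xstar is nonpositive
  have hslack : ∀ lam' : Fin m → ℝ, 0 ≤ lam' → lam' ⬝ᵥ (b - A.mulVec xstar) ≤ 0 := by
    intro lam' h0
    apply dot_nonpos lam' _ h0
    intro i
    simp only [Pi.sub_apply, Pi.zero_apply]
    linarith [hx2 i]
  -- global extension of the dual bound
  have hglobal : ∀ x ∈ S, c ⬝ᵥ xstar ≤ c ⬝ᵥ x + lam ⬝ᵥ (b - A.mulVec x) := by
    intro x hxS
    by_contra hcon
    push_neg at hcon
    set d : Fin n → ℝ := c - A.transpose.mulVec lam with hd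
    have heq : ∀ y : Fin n → ℝ, c ⬝ᵥ y + lam ⬝ᵥ (b - A.mulVec y) = d ⬝ᵥ y + lam ⬝ᵥ b :=
      fun y => lag_eq A b c lam y
    have hfx : d ⬝ᵥ xstar + lam ⬝ᵥ b = c ⬝ᵥ xstar := by
      have h1 : c ⬝ᵥ xstar ≤ c ⬝ᵥ xstar + lam ⬝ᵥ (b - A.mulVec xstar) := hlam xstar hxF
      have h2 := hslack lam hlam0
      have h3 := heq xstar
      linarith
    set T : ℝ := 1 + ∑ i, |x i - xstar i| with hT
    have hTpos : 0 < T := by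
      have : 0 ≤ ∑ i, |x i - xstar i| := Finset.sum_nonneg fun i _ => abs_nonneg _
      rw [hT]; linarith
    set t : ℝ := T⁻¹ with ht
    have htpos : 0 < t := inv_pos.mpr hTpos
    have ht1 : t ≤ 1 := by
      rw [ht, inv_eq_one_div, div_le_one hTpos]
      have : 0 ≤ ∑ i, |x i - xstar i| := Finset.sum_nonneg fun i _ => abs_nonneg _
      rw [hT]; linarith
    set z : Fin n → ℝ := xstar + t • (x - xstar) with hz
    have hzS : z ∈ S := by
      have hcomb := hSconv hx1 hxS (by linarith : (0:ℝ) ≤ 1 - t) htpos.le (by ring)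
      have : (1 - t) • xstar + t • x = z := by
        rw [hz]; module
      rwa [this] at hcomb
    have hzIcc : z ∈ Set.Icc (xstar - 1) (xstar + 1) := by
      have hbound : ∀ i, |t * (x i - xstar i)| ≤ 1 := by
        intro i
        rw [abs_mul, abs_of_pos htpos]
        have h1 : |x i - xstar i| ≤ ∑ j, |x j - xstar j| :=
          Finset.single_le_sum (f := fun j => |x j - xstar j|)
            (fun j _ => abs_nonneg _) (Finset.mem_univ i)
        have h2 : t * |x i - xstar i| ≤ t * T := by
          apply mul_le_mul_of_nonneg_left _ htpos.le
          rw [hT]; linarith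
        have h3 : t * T = 1 := by
          rw [ht]; field_simp
        linarith
      constructor
      · intro i
        have := (abs_le.mp (hbound i)).1
        simp only [hz, Pi.sub_apply, Pi.add_apply, Pi.smul_apply, Pi.one_apply, smul_eq_mul]
        linarith
      · intro i
        have := (abs_le.mp (hbound i)).2
        simp only [hz, Pi.sub_apply, Pi.add_apply, Pi.smul_apply, Pi.one_apply, smul_eq_mul]
        linarith
    have hzF : z ∈ convexHull ℝ (F : Set (Fin n → ℝ)) := by
      rw [← hF]; exact ⟨hzS, hzIcc⟩
    have hzineq := hlam z hzF
    rw [heq z] at hzineq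
    have hdz : d ⬝ᵥ z = d ⬝ᵥ xstar + t * (d ⬝ᵥ x - d ⬝ᵥ xstar) := by
      have hlin := dp_isLinear d
      have h1 : d ⬝ᵥ z = d ⬝ᵥ xstar + d ⬝ᵥ (t • (x - xstar)) := by
        rw [hz]; exact hlin.map_add xstar (t • (x - xstar))
      have h2 : d ⬝ᵥ (t • (x - xstar)) = t * (d ⬝ᵥ (x - xstar)) := hlin.map_smul t (x - xstar)
      have h3 : d ⬝ᵥ (x - xstar) = d ⬝ᵥ x - d ⬝ᵥ xstar := by
        have := hlin.map_add (x - xstar) xstar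
        simp only [sub_add_cancel] at this
        linarith
      rw [h1, h2, h3]
    have hdxlt : d ⬝ᵥ x + lam ⬝ᵥ b < c ⬝ᵥ xstar := by
      rw [← heq x]; exact hcon
    have hneg : t * (d ⬝ᵥ x - d ⬝ᵥ xstar) < 0 := by
      apply mul_neg_of_pos_of_neg htpos
      linarith
    rw [hdz] at hzineq
    linarith
  -- assemble
  apply le_antisymm
  · apply sSup_le
    rintro w ⟨lam', hlam', rfl⟩
    have hfuneq : (fun x : Fin n → ℝ => ((c ⬝ᵥ x + lam' ⬝ᵥ (b - A.mulVec x) : ℝ) : EReal))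
        = fun x : Fin n → ℝ =>
          (((c - A.transpose.mulVec lam') ⬝ᵥ x + lam' ⬝ᵥ b : ℝ) : EReal) := by
      funext x
      rw [lag_eq]
    beta_reduce
    rw [hfuneq]
    refine le_trans (sInf_le_affine_closure (c - A.transpose.mulVec lam') (lam' ⬝ᵥ b) X
      xstar hx1) ?_
    rw [EReal.coe_le_coe_iff, ← lag_eq]
    have := hslack lam' hlam'
    linarith
  · refine le_trans ?_ (le_sSup (Set.mem_image_of_mem _ (show lam ∈ {l : Fin m → ℝ | 0 ≤ l}
      from hlam0)))
    apply le_sInf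
    rintro w ⟨x, hxX, rfl⟩
    rw [EReal.coe_le_coe_iff]
    exact hglobal x (subset_closure (subset_convexHull ℝ X hxX))

end Part3
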